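/- Suppose gcd(m, l+1) = d > 1. If (w_1,…,w_l) and (w̃_1,…,w̃_l) produce the same characteristic polynomial D = D̃ and moreover w_j = w̃_j for j = m−d+1,…,m−1, then w_j = w̃_j for all j = 1,…,l. -/

import Mathlib

open Polynomial

noncomputable def psi : ℕ → Polynomial ℂ
  | 0 => 0
  | 1 => 1
  | (n + 2) => Polynomial.X * psi (n + 1) - psi n

noncomputable def Dpoly (l m : ℕ) (w : ℕ → ℂ) : Polynomial ℂ :=
  psi m * (psi (l - m + 2) +
      ∑ j ∈ Finset.Icc 1 (l - m + 1), Polynomial.C (w (l + 1 - j)) * psi j) +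
  psi (l - m + 1) *
    (-psi (m - 1) + ∑ j ∈ Finset.Icc 1 (m - 1), Polynomial.C (w j) * psi j)

lemma psi_zero : psi 0 = 0 := rfl
lemma psi_one : psi 1 = 1 := rfl
lemma psi_add_two (n : ℕ) : psi (n+2) = X * psi (n+1) - psi n := rfl
lemma psi_two : psi 2 = X := by simp [psi_add_two, psi_one, psi_zero]

lemma psi_monic_natDegree : ∀ n : ℕ, (psi (n+1)).Monic ∧ (psi (n+1)).natDegree = n := by
  intro n
  induction n using Nat.strong_induction_on with
  | _ n ih =>
    match n with
    | 0 => exact ⟨monic_one, natDegree_one⟩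
    | 1 => rw [psi_two]; exact ⟨monic_X, natDegree_X⟩
    | (k+2) =>
      obtain ⟨h1, h2⟩ := ih (k+1) (by omega)
      obtain ⟨h3, h4⟩ := ih k (by omega)
      rw [psi_add_two]
      have hm : (X * psi (k+2)).Monic := monic_X.mul h1
      have hdeg : (X * psi (k+2)).natDegree = k + 2 := by
        rw [natDegree_mul X_ne_zero h1.ne_zero, natDegree_X, h2]
        omega
      have hd2 : (X * psi (k+2)).degree = ((k+2:ℕ) : WithBot ℕ) := by
        rw [degree_eq_natDegree hm.ne_zero, hdeg]
      have hlt : (psi (k+1)).degree < (X * psi (k+2)).degree := by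
        rw [hd2]
        calc (psi (k+1)).degree ≤ (((psi (k+1)).natDegree :ℕ) : WithBot ℕ) :=
              degree_le_natDegree
          _ = ((k:ℕ) : WithBot ℕ) := by rw [h4]
          _ < ((k+2 : ℕ) : WithBot ℕ) := by exact_mod_cast by omega
      refine ⟨hm.sub_of_left hlt, ?_⟩
      rw [natDegree_sub_eq_left_of_natDegree_lt (by rw [hdeg, h4]; omega), hdeg]

lemma psi_monic (n : ℕ) (hn : 1 ≤ n) : (psi n).Monic := by
  obtain ⟨k, rfl⟩ := Nat.exists_eq_add_of_le hn
  rw [Nat.add_comm]; exact (psi_monic_natDegree k).1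

lemma psi_ne_zero (n : ℕ) (hn : 1 ≤ n) : psi n ≠ 0 := (psi_monic n hn).ne_zero

lemma psi_natDegree (n : ℕ) : (psi n).natDegree = n - 1 := by
  match n with
  | 0 => simp [psi_zero]
  | (k+1) => exact (psi_monic_natDegree k).2

lemma psi_degree (n : ℕ) (hn : 1 ≤ n) : (psi n).degree = ((n - 1 : ℕ) : WithBot ℕ) := by
  rw [degree_eq_natDegree (psi_ne_zero _ hn), psi_natDegree]

lemma psi_add_mul (a : ℕ) : ∀ b : ℕ, psi (a + b + 1) = psi (a+1) * psi (b+1) - psi a * psi b := by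
  intro b
  induction b using Nat.strong_induction_on with
  | _ b ih =>
    match b with
    | 0 => simp [psi_one, psi_zero]
    | 1 => rw [psi_two, show a + 1 + 1 = a + 2 from rfl, psi_add_two, psi_one]; ring
    | (k+2) =>
      have h2 := ih k (by omega)
      have h1' : psi (a+k+1+1) = psi (a+1) * psi (k+2) - psi a * psi (k+1) := by
        rw [show a+k+1+1 = a+(k+1)+1 from by omega]; exact ih (k+1) (by omega)
      rw [show a + (k+2) + 1 = (a + k + 1) + 2 from by omega, psi_add_two, h1', h2,
        psi_add_two (k+1), psi_add_two k]
      ring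

lemma psi_coprime_succ : ∀ n : ℕ, IsCoprime (psi n) (psi (n+1)) := by
  intro n
  induction n with
  | zero => rw [psi_zero, psi_one]; exact isCoprime_zero_left.mpr isUnit_one
  | succ k ih =>
    rw [psi_add_two]
    have : IsCoprime (psi (k+1)) (- psi k) := ih.symm.neg_right
    have h2 := this.add_mul_left_right X
    simpa [sub_eq_add_neg, add_comm, mul_comm] using h2

lemma psi_mod (a : ℕ) (ha : 1 ≤ a) (r : ℕ) :
    ∀ q : ℕ, ∃ M, psi (a * q + r) = (- psi (a-1))^q * psi r + psi a * M := by
  intro q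
  induction q with
  | zero => exact ⟨0, by simp⟩
  | succ k ih =>
    obtain ⟨M, hM⟩ := ih
    have key : psi (a*k + r + a) =
        psi (a*k+r+1) * psi a - psi (a*k+r) * psi (a-1) := by
      have := psi_add_mul (a*k+r) (a-1)
      rw [show a*k + r + (a-1) + 1 = a*k + r + a from by omega,
        show a - 1 + 1 = a from by omega] at this
      exact this
    refine ⟨psi (a*k+r+1) - psi (a-1) * M, ?_⟩
    rw [show a * (k+1) + r = a*k + r + a from by ring, key, hM]
    ring

lemma psi_gcd_cop : ∀ a b : ℕ, ∃ P Q : Polynomial ℂ,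
    psi a = psi (Nat.gcd a b) * P ∧ psi b = psi (Nat.gcd a b) * Q ∧ IsCoprime P Q := by
  intro a b
  induction a, b using Nat.gcd.induction with
  | H0 b => exact ⟨0, 1, by simp [psi_zero], by simp, isCoprime_zero_left.mpr isUnit_one⟩
  | H1 a b ha ih =>
    obtain ⟨P, Q, hP, hQ, hcop⟩ := ih
    rw [Nat.gcd_rec a b]
    set g := Nat.gcd (b % a) a with hg
    obtain ⟨M, hM⟩ := psi_mod a ha (b % a) (b / a)
    rw [Nat.div_add_mod] at hM
    refine ⟨Q, (- psi (a-1))^(b/a) * P + Q * M, hQ, ?_, ?_⟩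
    · rw [hM, hP, hQ]; ring
    · apply IsCoprime.add_mul_left_right
      have hcons : IsCoprime (psi a) (psi (a-1)) := by
        have := (psi_coprime_succ (a-1)).symm
        rwa [show a - 1 + 1 = a from by omega] at this
      have hQa : IsCoprime Q (psi (a-1)) :=
        hcons.of_isCoprime_of_dvd_left ⟨psi g, by rw [hQ]; ring⟩
      exact IsCoprime.mul_right hQa.neg_right.pow_right hcop.symm

open Finset in
lemma psi_lin_indep : ∀ (N : ℕ) (c : ℕ → ℂ),
    (∑ j ∈ Icc 1 N, C (c j) * psi j) = 0 → ∀ j ∈ Icc 1 N, c j = 0 := by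
  intro N
  induction N with
  | zero => intro c _ j hj; simp at hj
  | succ N ih =>
    intro c h j hj
    have hins : Icc 1 (N+1) = insert (N+1) (Icc 1 N) := by
      ext x; simp only [mem_Icc, mem_insert]; omega
    rw [hins, Finset.sum_insert (by simp [mem_Icc])] at h
    rw [add_comm] at h
    have htop : c (N+1) = 0 := by
      have hc := congrArg (fun p => p.coeff N) h
      simp only [coeff_add, coeff_zero] at hc
      rw [finset_sum_coeff] at hc
      have hz : ∀ i ∈ Icc 1 N, (C (c i) * psi i).coeff N = 0 := by
        intro i hi
        simp only [mem_Icc] at hi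
        apply coeff_eq_zero_of_natDegree_lt
        calc (C (c i) * psi i).natDegree ≤ (C (c i)).natDegree + (psi i).natDegree :=
              natDegree_mul_le
          _ < N := by rw [natDegree_C, psi_natDegree]; omega
      rw [Finset.sum_eq_zero hz, zero_add, coeff_C_mul] at hc
      have : (psi (N+1)).coeff N = 1 := by
        have := (psi_monic (N+1) (by omega)).coeff_natDegree
        rwa [psi_natDegree, Nat.add_sub_cancel] at this
      rwa [this, mul_one] at hc
    rw [mem_Icc] at hj
    rcases Nat.lt_or_ge j (N+1) with hlt | hge
    · rw [htop, map_zero, zero_mul, add_zero] at h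
      exact ih c h j (mem_Icc.mpr ⟨hj.1, by omega⟩)
    · have : j = N + 1 := by omega
      rw [this]; exact htop

open Finset in
theorem uniqueness_degenerate (l m d : ℕ) (hm : 1 ≤ m) (hml : m ≤ l)
    (hgcd : Nat.gcd m (l + 1) = d) (hd : 1 < d) (w wt : ℕ → ℂ)
    (hD : Dpoly l m w = Dpoly l m wt)
    (hw : ∀ j, m - d + 1 ≤ j → j ≤ m - 1 → w j = wt j) :
    ∀ j, 1 ≤ j → j ≤ l → w j = wt j := by
  have hdm : d ∣ m := hgcd ▸ Nat.gcd_dvd_left m (l+1)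
  have hdl : d ∣ (l+1) := hgcd ▸ Nat.gcd_dvd_right m (l+1)
  have hdm' : d ≤ m := Nat.le_of_dvd (by omega) hdm
  set SA : Polynomial ℂ := ∑ j ∈ Icc 1 (l-m+1), C (w (l+1-j) - wt (l+1-j)) * psi j with hSA
  set SB : Polynomial ℂ := ∑ j ∈ Icc 1 (m-1), C (w j - wt j) * psi j with hSB
  have key : psi m * SA + psi (l-m+1) * SB = 0 := by
    have eA : SA = (∑ j ∈ Icc 1 (l-m+1), C (w (l+1-j)) * psi j)
        - (∑ j ∈ Icc 1 (l-m+1), C (wt (l+1-j)) * psi j) := by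
      rw [hSA, ← Finset.sum_sub_distrib]
      apply Finset.sum_congr rfl; intro j _; rw [map_sub]; ring
    have eB : SB = (∑ j ∈ Icc 1 (m-1), C (w j) * psi j)
        - (∑ j ∈ Icc 1 (m-1), C (wt j) * psi j) := by
      rw [hSB, ← Finset.sum_sub_distrib]
      apply Finset.sum_congr rfl; intro j _; rw [map_sub]; ring
    unfold Dpoly at hD
    rw [eA, eB]; linear_combination hD
  -- restrict SB
  set SB' : Polynomial ℂ := ∑ j ∈ Icc 1 (m-d), C (w j - wt j) * psi j with hSB'
  have hsplit : SB = SB' := by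
    rw [hSB, hSB']
    symm
    apply Finset.sum_subset
    · intro x hx; rw [mem_Icc] at hx ⊢; omega
    · intro x hx hx'
      rw [mem_Icc] at hx; rw [mem_Icc] at hx'
      have : w x = wt x := hw x (by omega) hx.2
      rw [this, sub_self, map_zero, zero_mul]
  -- gcd of m and l-m+1
  have hgd : Nat.gcd m (l-m+1) = d := by
    rw [← hgcd]
    apply Nat.dvd_antisymm
    · apply Nat.dvd_gcd (Nat.gcd_dvd_left _ _)
      have h1 := Nat.gcd_dvd_left m (l-m+1)
      have h2 := Nat.gcd_dvd_right m (l-m+1)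
      have : l + 1 = m + (l - m + 1) := by omega
      rw [this]; exact Nat.dvd_add h1 h2
    · apply Nat.dvd_gcd (Nat.gcd_dvd_left _ _)
      have h1 := Nat.gcd_dvd_left m (l+1)
      have h2 := Nat.gcd_dvd_right m (l+1)
      have : l - m + 1 = (l + 1) - m := by omega
      rw [this]; exact Nat.dvd_sub h2 h1
  obtain ⟨P, Q, hP, hQ, hcop⟩ := psi_gcd_cop m (l-m+1)
  rw [hgd] at hP hQ
  have hpsid : psi d ≠ 0 := psi_ne_zero d (by omega)
  have hPne : P ≠ 0 := by
    intro h0; apply psi_ne_zero m hm; rw [hP, h0, mul_zero]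
  have hPdeg : P.natDegree = m - d := by
    have := congrArg natDegree hP
    rw [natDegree_mul hpsid hPne, psi_natDegree, psi_natDegree] at this
    omega
  have key2 : P * SA + Q * SB' = 0 := by
    apply mul_left_cancel₀ hpsid
    rw [mul_zero]
    calc psi d * (P * SA + Q * SB') = psi m * SA + psi (l-m+1) * SB' := by
          rw [hP, hQ]; ring
      _ = 0 := by rw [← hsplit]; exact key
  have hdvd : P ∣ SB' := by
    have hpq : P ∣ Q * SB' := ⟨-SA, by linear_combination key2⟩
    exact hcop.dvd_of_dvd_mul_left hpq
  have hSB'deg : SB'.degree < ((m-d : ℕ) : WithBot ℕ) := by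
    rw [hSB']
    apply lt_of_le_of_lt (degree_sum_le _ _)
    rw [Finset.sup_lt_iff (WithBot.bot_lt_coe _)]
    intro j hj
    rw [mem_Icc] at hj
    calc (C (w j - wt j) * psi j).degree ≤ (C (w j - wt j)).degree + (psi j).degree :=
          degree_mul_le _ _
      _ ≤ 0 + (psi j).degree := add_le_add degree_C_le le_rfl
      _ = (psi j).degree := zero_add _
      _ = ((j-1 : ℕ) : WithBot ℕ) := psi_degree j hj.1
      _ < ((m-d : ℕ) : WithBot ℕ) := by exact_mod_cast (by omega : j - 1 < m - d)
  have hSB'0 : SB' = 0 := by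
    apply Polynomial.eq_zero_of_dvd_of_degree_lt hdvd
    rwa [degree_eq_natDegree hPne, hPdeg]
  have hSA0 : SA = 0 := by
    rw [hsplit, hSB'0, mul_zero, add_zero] at key
    exact (mul_eq_zero.mp key).resolve_left (psi_ne_zero m hm)
  have hBzero : ∀ j, 1 ≤ j → j ≤ m - d → w j = wt j := by
    intro j h1 h2
    have := psi_lin_indep (m-d) (fun j => w j - wt j) (by rw [← hSB']; exact hSB'0)
      j (mem_Icc.mpr ⟨h1, h2⟩)
    exact sub_eq_zero.mp this
  have hAzero : ∀ j, m ≤ j → j ≤ l → w j = wt j := by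
    intro j h1 h2
    have hmem : l + 1 - j ∈ Icc 1 (l-m+1) := mem_Icc.mpr ⟨by omega, by omega⟩
    have := psi_lin_indep (l-m+1) (fun i => w (l+1-i) - wt (l+1-i))
      (by rw [← hSA]; exact hSA0) (l+1-j) hmem
    rw [show l + 1 - (l + 1 - j) = j from by omega] at this
    exact sub_eq_zero.mp this
  intro j h1 h2
  rcases Nat.lt_or_ge j m with hlt | hge
  · rcases le_or_gt j (m-d) with hle | hgt
    · exact hBzero j h1 hle
    · exact hw j (by omega) (by omega)
  · exact hAzero j hge h2
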